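/- Let the facet F of the convex hull of the 12 points (two unit-edge regular hexagons in totally orthogonal planes inscribed in S^3) be projected radially onto S^3. Then the resulting 3-dimensional spherical simplex has two opposite edges of angular length π/3 and four edges of angular length π/2, and its circumradius equals arccos(√(3/8)). -/

import Mathlib

open scoped RealInnerProductSpace
open Real

noncomputable def pt4 (a b c e : ℝ) : EuclideanSpace ℝ (Fin 4) :=
  (WithLp.equiv 2 (Fin 4 → ℝ)).symm ![a, b, c, e]

/-- Two consecutive vertices of the first hexagon. -/
noncomputable def a0 : EuclideanSpace ℝ (Fin 4) := pt4 1 0 0 0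
noncomputable def a1 : EuclideanSpace ℝ (Fin 4) := pt4 (cos (π / 3)) (sin (π / 3)) 0 0
/-- Two consecutive vertices of the second (totally orthogonal) hexagon. -/
noncomputable def b0 : EuclideanSpace ℝ (Fin 4) := pt4 0 0 1 0
noncomputable def b1 : EuclideanSpace ℝ (Fin 4) := pt4 0 0 (cos (π / 3)) (sin (π / 3))

lemma inner_pt4_left (a b c e : ℝ) (x : EuclideanSpace ℝ (Fin 4)) :
    ⟪x, pt4 a b c e⟫ = x 0 * a + x 1 * b + x 2 * c + x 3 * e := by
  simp [pt4, PiLp.inner_apply, Fin.sum_univ_four]; ring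

lemma inner_pt4 (a b c e a' b' c' e' : ℝ) :
    ⟪pt4 a b c e, pt4 a' b' c' e'⟫ = a*a' + b*b' + c*c' + e*e' := by
  simp [pt4, PiLp.inner_apply, Fin.sum_univ_four]; ring

lemma norm_pt4 (a b c e : ℝ) : ‖pt4 a b c e‖ = Real.sqrt (a^2+b^2+c^2+e^2) := by
  simp [pt4, EuclideanSpace.norm_eq, Fin.sum_univ_four, sq_abs]

lemma sqrt38 : Real.sqrt (3/8) = Real.sqrt 6 / 4 := by
  have h : (Real.sqrt 6 / 4)^2 = 3/8 := by
    rw [div_pow, Real.sq_sqrt (by norm_num : (0:ℝ) ≤ 6)]; norm_num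
  rw [← h, Real.sqrt_sq (by positivity)]

set_option maxHeartbeats 1000000 in
theorem facet_simplex_edges_and_circumradius :
    Real.arccos ⟪a0, a1⟫ = π / 3 ∧
    Real.arccos ⟪b0, b1⟫ = π / 3 ∧
    (∀ u ∈ ({a0, a1} : Set (EuclideanSpace ℝ (Fin 4))),
      ∀ v ∈ ({b0, b1} : Set (EuclideanSpace ℝ (Fin 4))),
        Real.arccos ⟪u, v⟫ = π / 2) ∧
    sInf {r : ℝ | ∃ c : EuclideanSpace ℝ (Fin 4), ‖c‖ = 1 ∧
        ∀ v ∈ ({a0, a1, b0, b1} : Set (EuclideanSpace ℝ (Fin 4))),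
          Real.arccos ⟪c, v⟫ ≤ r} =
      Real.arccos (Real.sqrt (3 / 8)) := by
  have hc3 : cos (π/3) = 1/2 := Real.cos_pi_div_three
  have hs3 : sin (π/3) = Real.sqrt 3 / 2 := Real.sin_pi_div_three
  have sq3 : Real.sqrt 3 ^ 2 = 3 := Real.sq_sqrt (by norm_num)
  have sq6 : Real.sqrt 6 ^ 2 = 6 := Real.sq_sqrt (by norm_num)
  have sq2 : Real.sqrt 2 ^ 2 = 2 := Real.sq_sqrt (by norm_num)
  have s6pos : (0:ℝ) < Real.sqrt 6 := Real.sqrt_pos.mpr (by norm_num)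
  have s23 : Real.sqrt 2 * Real.sqrt 3 = Real.sqrt 6 := by
    rw [← Real.sqrt_mul (by norm_num : (0:ℝ) ≤ 2)]; norm_num
  have h1 : ⟪a0, a1⟫ = cos (π/3) := by rw [a0, a1, inner_pt4]; ring
  have h2 : ⟪b0, b1⟫ = cos (π/3) := by rw [b0, b1, inner_pt4]; ring
  have hpi3 : Real.arccos (cos (π/3)) = π/3 :=
    Real.arccos_cos (by positivity) (by linarith [Real.pi_pos])
  refine ⟨by rw [h1, hpi3], by rw [h2, hpi3], ?_, ?_⟩
  · rintro u hu v hv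
    have hz : ⟪u, v⟫ = 0 := by
      rcases hu with rfl | rfl <;> rcases hv with rfl | rfl <;>
        · simp only [a0, a1, b0, b1]; rw [inner_pt4]; ring
    rw [hz, Real.arccos_zero]
  · set S : Set ℝ := {r : ℝ | ∃ c : EuclideanSpace ℝ (Fin 4), ‖c‖ = 1 ∧
        ∀ v ∈ ({a0, a1, b0, b1} : Set (EuclideanSpace ℝ (Fin 4))),
          Real.arccos ⟪c, v⟫ ≤ r} with hS
    have na0 : ‖a0‖ = 1 := by rw [a0, norm_pt4]; norm_num
    have na1 : ‖a1‖ = 1 := by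
      rw [a1, norm_pt4, hc3, hs3,
        show (1/2:ℝ)^2 + (Real.sqrt 3/2)^2 + 0^2 + 0^2 = 1 by linear_combination sq3/4]
      exact Real.sqrt_one
    have nb0 : ‖b0‖ = 1 := by rw [b0, norm_pt4]; norm_num
    have nb1 : ‖b1‖ = 1 := by
      rw [b1, norm_pt4, hc3, hs3,
        show (0:ℝ)^2 + 0^2 + (1/2)^2 + (Real.sqrt 3/2)^2 = 1 by linear_combination sq3/4]
      exact Real.sqrt_one
    have hlb : ∀ r ∈ S, Real.arccos (Real.sqrt (3/8)) ≤ r := by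
      intro r hr
      obtain ⟨c, hc, hall⟩ := hr
      have hsum : (c 0)^2 + (c 1)^2 + (c 2)^2 + (c 3)^2 = 1 := by
        have h' := hc
        rw [EuclideanSpace.norm_eq] at h'
        have h2' : ∑ i, ‖c i‖^2 = 1 := by
          have := congrArg (· ^ 2) h'
          simpa [Real.sq_sqrt (Finset.sum_nonneg fun i _ => sq_nonneg _)] using this
        simpa [Fin.sum_univ_four, sq_abs] using h2'
      have i0 : ⟪c, a0⟫ = c 0 := by rw [a0, inner_pt4_left]; ring
      have i1 : ⟪c, a1⟫ = c 0 / 2 + Real.sqrt 3 / 2 * c 1 := by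
        rw [a1, inner_pt4_left, hc3, hs3]; ring
      have i2 : ⟪c, b0⟫ = c 2 := by rw [b0, inner_pt4_left]; ring
      have i3 : ⟪c, b1⟫ = c 2 / 2 + Real.sqrt 3 / 2 * c 3 := by
        rw [b1, inner_pt4_left, hc3, hs3]; ring
      have key : ∃ v ∈ ({a0, a1, b0, b1} : Set (EuclideanSpace ℝ (Fin 4))),
          ⟪c, v⟫ ≤ Real.sqrt 6 / 4 := by
        by_contra hcon
        push_neg at hcon
        have k0 := hcon a0 (by simp)
        have k1 := hcon a1 (by simp)
        have k2 := hcon b0 (by simp)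
        have k3 := hcon b1 (by simp)
        rw [i0] at k0; rw [i1] at k1; rw [i2] at k2; rw [i3] at k3
        have hs : Real.sqrt 6
            < 3/2 * c 0 + Real.sqrt 3 / 2 * c 1 + 3/2 * c 2 + Real.sqrt 3 / 2 * c 3 := by
          linarith
        have hid : 6 * ((c 0)^2 + (c 1)^2 + (c 2)^2 + (c 3)^2)
            - (3/2 * c 0 + Real.sqrt 3 / 2 * c 1 + 3/2 * c 2 + Real.sqrt 3 / 2 * c 3)^2
            = 1/4 * ((3 * c 1 - Real.sqrt 3 * c 0)^2 + 9 * (c 2 - c 0)^2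
              + (3 * c 3 - Real.sqrt 3 * c 0)^2 + (Real.sqrt 3 * c 2 - 3 * c 1)^2
              + 3 * (c 3 - c 1)^2 + (3 * c 3 - Real.sqrt 3 * c 2)^2) := by
          linear_combination (-(((c 1 + c 3)^2 + 2*(c 0)^2 + 2*(c 2)^2)/4)) * sq3
        have h6 : (3/2 * c 0 + Real.sqrt 3 / 2 * c 1 + 3/2 * c 2 + Real.sqrt 3 / 2 * c 3)^2
            ≤ 6 := by
          have n1 := sq_nonneg (3 * c 1 - Real.sqrt 3 * c 0)
          have n2 := sq_nonneg (c 2 - c 0)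
          have n3 := sq_nonneg (3 * c 3 - Real.sqrt 3 * c 0)
          have n4 := sq_nonneg (Real.sqrt 3 * c 2 - 3 * c 1)
          have n5 := sq_nonneg (c 3 - c 1)
          have n6 := sq_nonneg (3 * c 3 - Real.sqrt 3 * c 2)
          rw [hsum] at hid
          linarith
        have hgt : (6:ℝ)
            < (3/2 * c 0 + Real.sqrt 3 / 2 * c 1 + 3/2 * c 2 + Real.sqrt 3 / 2 * c 3)^2 := by
          have hmul := mul_lt_mul'' hs hs (le_of_lt s6pos) (le_of_lt s6pos)
          have h66 : Real.sqrt 6 * Real.sqrt 6 = 6 :=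
            Real.mul_self_sqrt (by norm_num)
          calc (6:ℝ) = Real.sqrt 6 * Real.sqrt 6 := h66.symm
            _ < (3/2 * c 0 + Real.sqrt 3 / 2 * c 1 + 3/2 * c 2 + Real.sqrt 3 / 2 * c 3)
                * (3/2 * c 0 + Real.sqrt 3 / 2 * c 1 + 3/2 * c 2 + Real.sqrt 3 / 2 * c 3) :=
                  hmul
            _ = (3/2 * c 0 + Real.sqrt 3 / 2 * c 1 + 3/2 * c 2 + Real.sqrt 3 / 2 * c 3)^2 :=
                  by ring
        linarith
      obtain ⟨v, hv, hle⟩ := key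
      have hnv : ‖v‖ = 1 := by
        rcases hv with rfl | rfl | rfl | rfl <;> assumption
      calc Real.arccos (Real.sqrt (3/8)) ≤ Real.arccos ⟪c, v⟫ := by
            rw [Real.arccos_eq_pi_div_two_sub_arcsin, Real.arccos_eq_pi_div_two_sub_arcsin]
            have := Real.monotone_arcsin (by rw [sqrt38]; exact hle :
              ⟪c, v⟫ ≤ Real.sqrt (3/8))
            linarith
          _ ≤ r := hall v hv
    have hmem : Real.arccos (Real.sqrt (3/8)) ∈ S := by
      refine ⟨pt4 (Real.sqrt 6/4) (Real.sqrt 2/4) (Real.sqrt 6/4) (Real.sqrt 2/4), ?_, ?_⟩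
      · rw [norm_pt4,
          show (Real.sqrt 6/4)^2 + (Real.sqrt 2/4)^2 + (Real.sqrt 6/4)^2 + (Real.sqrt 2/4)^2
            = 1 by linear_combination sq6/8 + sq2/8]
        exact Real.sqrt_one
      · intro v hv
        have hx : ⟪(pt4 (Real.sqrt 6/4) (Real.sqrt 2/4) (Real.sqrt 6/4) (Real.sqrt 2/4)
            : EuclideanSpace ℝ (Fin 4)), v⟫ = Real.sqrt (3/8) := by
          rw [sqrt38]
          rcases hv with rfl | rfl | rfl | rfl
          · rw [a0, inner_pt4]; ring
          · rw [a1, inner_pt4, hc3, hs3]; linear_combination s23/8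
          · rw [b0, inner_pt4]; ring
          · rw [b1, inner_pt4, hc3, hs3]; linear_combination s23/8
        rw [hx]
    exact le_antisymm (csInf_le ⟨_, hlb⟩ hmem) (le_csInf ⟨_, hmem⟩ hlb)
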